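/- arXiv:0902.4415 — 8 statements merged into one kernel-verified Lean document; each statement's English description precedes it below -/
import Mathlib

section
/- Let H be a real Hilbert space, let A : H → 2^H be maximal monotone, let x ∈ H, and let 0 < γ ≤ μ. Then ‖J_{γA} x − x‖ ≤ 2 ‖J_{μA} x − x‖. -/
open scoped RealInnerProductSpace

/-- A set-valued operator `A : H → 2^H` is monotone if
`⟨x − y, u − v⟩ ≥ 0` for all `(x,u), (y,v)` in its graph. -/
def IsMonotoneOp {H : Type*} [NormedAddCommGroup H] [InnerProductSpace ℝ H]
    (A : H → Set H) : Prop :=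
  ∀ x y u v : H, u ∈ A x → v ∈ A y → 0 ≤ ⟪x - y, u - v⟫

/-- A monotone operator is maximal monotone if its graph is not properly
contained in the graph of another monotone operator. -/
def IsMaximalMonotone {H : Type*} [NormedAddCommGroup H] [InnerProductSpace ℝ H]
    (A : H → Set H) : Prop :=
  IsMonotoneOp A ∧
    ∀ B : H → Set H, IsMonotoneOp B → (∀ x, A x ⊆ B x) → ∀ x, B x = A x

/-- `J` is the resolvent `(Id + γ A)⁻¹` of `A` with index `γ`: for every `y`,
`γ⁻¹ (y − J y) ∈ A (J y)`. -/
def IsResolvent {H : Type*} [NormedAddCommGroup H] [InnerProductSpace ℝ H]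
    (A : H → Set H) (γ : ℝ) (J : H → H) : Prop :=
  ∀ y : H, γ⁻¹ • (y - J y) ∈ A (J y)

/-- Lemma 2.7(ii): if `0 < γ ≤ μ`, then `‖J_{γA} x − x‖ ≤ 2 ‖J_{μA} x − x‖`. -/
theorem resolvent_shift_norm_le {H : Type*} [NormedAddCommGroup H]
    [InnerProductSpace ℝ H] [CompleteSpace H]
    (A : H → Set H) (hA : IsMaximalMonotone A)
    (γ μ : ℝ) (hγ : 0 < γ) (hγμ : γ ≤ μ)
    (Jγ Jμ : H → H) (hJγ : IsResolvent A γ Jγ) (hJμ : IsResolvent A μ Jμ)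
    (x : H) :
    ‖Jγ x - x‖ ≤ 2 * ‖Jμ x - x‖ := by
  have hμ : 0 < μ := hγ.trans_le hγμ
  have hmono := hA.1 (Jγ x) (Jμ x) _ _ (hJγ x) (hJμ x)
  set a := x - Jγ x with ha
  set b := x - Jμ x with hb
  have hdiff : Jγ x - Jμ x = b - a := by rw [ha, hb]; abel
  rw [hdiff] at hmono
  rw [inner_sub_left, inner_sub_right, inner_sub_right, real_inner_smul_right,
    real_inner_smul_right, real_inner_smul_right, real_inner_smul_right,
    real_inner_self_eq_norm_sq, real_inner_self_eq_norm_sq,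
    real_inner_comm b a] at hmono
  have hcs : ⟪b, a⟫ ≤ ‖b‖ * ‖a‖ := real_inner_le_norm b a
  have hγi : 0 < γ⁻¹ := inv_pos.mpr hγ
  have hμi : μ⁻¹ ≤ γ⁻¹ := inv_anti₀ hγ hγμ
  have hμip : 0 < μ⁻¹ := inv_pos.mpr hμ
  have hna : (0:ℝ) ≤ ‖a‖ := norm_nonneg a
  have hnb : (0:ℝ) ≤ ‖b‖ := norm_nonneg b
  have h1 : γ⁻¹ * ‖a‖ ^ 2 ≤ (γ⁻¹ + μ⁻¹) * ⟪b, a⟫ := by nlinarith [sq_nonneg ‖b‖]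
  have h2 : (0:ℝ) ≤ ⟪b, a⟫ := nonneg_of_mul_nonneg_right
    (le_trans (by positivity) h1) (by positivity)
  have h3 : ‖a‖ ^ 2 ≤ 2 * (‖b‖ * ‖a‖) := by nlinarith
  have key : ‖a‖ ≤ 2 * ‖b‖ := by nlinarith
  calc ‖Jγ x - x‖ = ‖a‖ := by rw [ha, norm_sub_rev]
    _ ≤ 2 * ‖b‖ := key
    _ = 2 * ‖Jμ x - x‖ := by rw [hb, norm_sub_rev]
end

section
/- Let H be a real Hilbert space, let A : H → 2^H be maximal monotone, let x ∈ H, and let γ, μ > 0. Then ‖J_{γ(^μA)} x − J_{γA} x‖ ≤ (2μ/(γ+μ)) ‖J_{γA} x − x‖, where ^μA denotes the Yosida approximation of A of index μ. -/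
open scoped RealInnerProductSpace
open Pointwise

/-- Lemma 2.7(iv): `‖J_{γ(^μA)} x − J_{γA} x‖ ≤ (2μ/(γ+μ)) ‖J_{γA} x − x‖`,
where `^μA = (Id − J_{μA})/μ` is the Yosida approximation of `A` of index `μ`. -/
theorem resolvent_yosida_dist {H : Type*} [NormedAddCommGroup H]
    [InnerProductSpace ℝ H] [CompleteSpace H]
    (A : H → Set H) (hA : IsMaximalMonotone A)
    (γ μ : ℝ) (hγ : 0 < γ) (hμ : 0 < μ)
    (Jγ : H → H) (hJγ : IsResolvent A γ Jγ)
    (Jμ : H → H) (hJμ : IsResolvent A μ Jμ)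
    -- `JY` is the resolvent of index `γ` of the Yosida approximation
    -- `^μA : w ↦ μ⁻¹ • (w − J_{μA} w)`
    (JY : H → H)
    (hJY : IsResolvent (fun w => ({μ⁻¹ • (w - Jμ w)} : Set H)) γ JY)
    (x : H) :
    ‖JY x - Jγ x‖ ≤ (2 * μ / (γ + μ)) * ‖Jγ x - x‖ := by
  have hmono := hA.1
  set p := JY x with hp
  set q := Jγ x with hq
  set r := Jμ p with hr0
  have heq : γ⁻¹ • (x - p) = μ⁻¹ • (p - r) := by
    have := hJY x
    simpa using this
  have h0 := hmono q r (γ⁻¹ • (x - q)) (μ⁻¹ • (p - r)) (hJγ x) (hJμ p)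
  rw [← heq] at h0
  have hpr : p - r = (μ * γ⁻¹) • (x - p) := by
    have : p - r = μ • (μ⁻¹ • (p - r)) := by
      rw [smul_smul, mul_inv_cancel₀ hμ.ne', one_smul]
    rw [← heq, smul_smul] at this
    exact this
  have hrr : r = p - (μ * γ⁻¹) • (x - p) := by rw [← hpr]; abel
  rw [hrr] at h0
  have harg : γ⁻¹ • (x - q) - γ⁻¹ • (x - p) = γ⁻¹ • (p - q) := by
    rw [← smul_sub]; congr 1; abel
  rw [harg] at h0
  have hfirst : q - (p - (μ * γ⁻¹) • (x - p)) = (q - p) + (μ * γ⁻¹) • (x - p) := by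
    abel
  rw [hfirst] at h0
  set D := ‖p - q‖ with hD
  set I := (⟪x - q, p - q⟫ : ℝ) with hI
  have h1 : (⟪q - p, p - q⟫ : ℝ) = -(D ^ 2) := by
    have : q - p = -(p - q) := by abel
    rw [this, inner_neg_left, real_inner_self_eq_norm_sq]
  have h2 : (⟪x - p, p - q⟫ : ℝ) = I - D ^ 2 := by
    have : x - p = (x - q) - (p - q) := by abel
    rw [this, inner_sub_left, real_inner_self_eq_norm_sq, hI]
  have hexp : (⟪(q - p) + (μ * γ⁻¹) • (x - p), γ⁻¹ • (p - q)⟫ : ℝ)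
      = γ⁻¹ * (-(D ^ 2)) + (μ * γ⁻¹) * (γ⁻¹ * (I - D ^ 2)) := by
    rw [inner_add_left, real_inner_smul_left, real_inner_smul_right,
      real_inner_smul_right, h1, h2]
  rw [hexp] at h0
  have hγi : (0:ℝ) < γ⁻¹ := inv_pos.mpr hγ
  have hkey : (γ + μ) * D ^ 2 ≤ μ * I := by
    have h0' := mul_nonneg (mul_pos hγ hγ).le h0
    have hrw : γ * γ * (γ⁻¹ * -D ^ 2 + μ * γ⁻¹ * (γ⁻¹ * (I - D ^ 2)))
        = γ * (-(D ^ 2)) + μ * (I - D ^ 2) := by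
      field_simp
    rw [hrw] at h0'
    linarith
  have hcs : I ≤ ‖x - q‖ * D := by
    have := real_inner_le_norm (x - q) (p - q)
    simpa [hI, hD] using this
  have hE : ‖Jγ x - x‖ = ‖x - q‖ := by rw [← hq, norm_sub_rev]
  rw [hE]
  set E := ‖x - q‖ with hEdef
  have hEnn : 0 ≤ E := norm_nonneg _
  have hDnn : 0 ≤ D := norm_nonneg _
  have hsum : (0:ℝ) < γ + μ := by linarith
  rw [div_mul_eq_mul_div, le_div_iff₀ hsum]
  rcases eq_or_lt_of_le hDnn with h | h
  · rw [← h]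
    simp only [zero_mul]
    positivity
  · have hq2 : (γ + μ) * D ^ 2 ≤ μ * (E * D) :=
      hkey.trans (mul_le_mul_of_nonneg_left hcs hμ.le)
    have : (γ + μ) * D ≤ μ * E := by
      rw [← mul_le_mul_iff_of_pos_right h]
      nlinarith
    nlinarith [mul_nonneg hμ.le hEnn]
end

section
/- Let H be a real Hilbert space, let A : H → 2^H be maximal monotone, let ε ∈ (0, 2β) and β > 0, and let (γ_n) be a sequence in [ε, 2β−ε]. Suppose (γ'_n) is a sequence in (0, 2β) with Σ_n |γ'_n − γ_n| < +∞, and set A_n = (γ'_n/γ_n) A for each n. Then for every ρ > 0, Σ_{n∈ℕ} sup_{‖y‖≤ρ} ‖J_{γ_n A_n} y − J_{γ_n A} y‖ < +∞. -/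
open scoped RealInnerProductSpace
open Pointwise

lemma res_bound {H : Type*} [NormedAddCommGroup H] [InnerProductSpace ℝ H]
    {A : H → Set H} (mono : IsMonotoneOp A)
    {x₀ w₀ : H} (hw₀ : w₀ ∈ A x₀)
    {μ : ℝ} (hμ : 0 < μ) {y p : H} (hp : μ⁻¹ • (y - p) ∈ A p) :
    ‖p - x₀‖ ≤ ‖y - x₀‖ + μ * ‖w₀‖ := by
  have h := mono p x₀ _ w₀ hp hw₀
  rw [inner_sub_right, real_inner_smul_right] at h
  have hyp : y - p = (y - x₀) - (p - x₀) := by abel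
  rw [hyp, inner_sub_right, real_inner_self_eq_norm_sq] at h
  have hT : ⟪p - x₀, y - x₀⟫ ≤ ‖p - x₀‖ * ‖y - x₀‖ := real_inner_le_norm _ _
  have hW : -(‖p - x₀‖ * ‖w₀‖) ≤ ⟪p - x₀, w₀⟫ := by
    have := abs_real_inner_le_norm (p - x₀) w₀
    cases abs_le.mp this with | intro h1 h2 => linarith
  -- from h : 0 ≤ μ⁻¹ * (T - N^2) - W
  have h2 : ‖p - x₀‖ ^ 2 ≤ ⟪p - x₀, y - x₀⟫ + μ * ‖p - x₀‖ * ‖w₀‖ := by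
    have h3 : 0 ≤ μ * (μ⁻¹ * (⟪p - x₀, y - x₀⟫ - ‖p - x₀‖ ^ 2) - ⟪p - x₀, w₀⟫) :=
      mul_nonneg hμ.le h
    have h4 : μ * μ⁻¹ = 1 := mul_inv_cancel₀ hμ.ne'
    have heq : μ * (μ⁻¹ * (⟪p - x₀, y - x₀⟫ - ‖p - x₀‖ ^ 2) - ⟪p - x₀, w₀⟫)
        = (μ * μ⁻¹) * (⟪p - x₀, y - x₀⟫ - ‖p - x₀‖ ^ 2) - μ * ⟪p - x₀, w₀⟫ := by ring
    rw [heq, h4, one_mul] at h3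
    have := mul_le_mul_of_nonneg_left hW hμ.le
    nlinarith [h3, this]
  rcases eq_or_lt_of_le (norm_nonneg (p - x₀)) with h0 | h0
  · rw [← h0]
    positivity
  · have := h2.trans (by nlinarith : ⟪p - x₀, y - x₀⟫ + μ * ‖p - x₀‖ * ‖w₀‖ ≤
      ‖p - x₀‖ * (‖y - x₀‖ + μ * ‖w₀‖))
    rw [pow_two] at this
    exact le_of_mul_le_mul_left (by linarith [this]) h0

lemma res_diff {H : Type*} [NormedAddCommGroup H] [InnerProductSpace ℝ H]
    {A : H → Set H} (mono : IsMonotoneOp A)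
    {μ lam : ℝ} (hμ : 0 < μ) (hlam : 0 < lam)
    {y p q : H} (hp : μ⁻¹ • (y - p) ∈ A p) (hq : lam⁻¹ • (y - q) ∈ A q) :
    ‖p - q‖ ≤ |μ - lam| / lam * ‖y - q‖ := by
  have h := mono p q _ _ hp hq
  rw [inner_sub_right, real_inner_smul_right, real_inner_smul_right] at h
  have hyp : y - p = (y - q) - (p - q) := by abel
  rw [hyp, inner_sub_right, real_inner_self_eq_norm_sq] at h
  set T := ⟪p - q, y - q⟫ with hT
  set N := ‖p - q‖ with hN
  set M := ‖y - q‖ with hM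
  set δ := |μ - lam| with hδ
  have hδ0 : 0 ≤ δ := abs_nonneg _
  have hd1 : μ - lam ≤ δ := le_abs_self _
  have hd2 : -(δ) ≤ μ - lam := neg_abs_le _
  have hTb : |T| ≤ N * M := abs_real_inner_le_norm _ _
  have hT1 : T ≤ N * M := (le_abs_self _).trans hTb
  have hT2 : -(N * M) ≤ T := by
    have := (neg_abs_le T); linarith [abs_le.mp hTb]
  have key : lam * N ^ 2 ≤ δ * (N * M) := by
    have h3 : 0 ≤ (μ * lam) * (μ⁻¹ * (T - N ^ 2) - lam⁻¹ * T) :=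
      mul_nonneg (mul_pos hμ hlam).le h
    have h4 : μ * μ⁻¹ = 1 := mul_inv_cancel₀ hμ.ne'
    have h5 : lam * lam⁻¹ = 1 := mul_inv_cancel₀ hlam.ne'
    have heq : μ * lam * (μ⁻¹ * (T - N ^ 2) - lam⁻¹ * T)
        = (μ * μ⁻¹) * (lam * (T - N ^ 2)) - (lam * lam⁻¹) * (μ * T) := by ring
    rw [heq, h4, h5, one_mul, one_mul] at h3
    have h6 : lam * N ^ 2 ≤ (lam - μ) * T := by nlinarith [h3]
    nlinarith [mul_nonneg (by linarith : (0:ℝ) ≤ δ - (μ - lam)) (by linarith : 0 ≤ N * M + T),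
      mul_nonneg (by linarith : (0:ℝ) ≤ δ + (μ - lam)) (by linarith : 0 ≤ N * M - T)]
  rw [div_mul_eq_mul_div, le_div_iff₀ hlam]
  rcases eq_or_lt_of_le (norm_nonneg (p - q)) with h0 | h0
  · have hN0 : N = 0 := hN.trans h0.symm
    rw [hN0, zero_mul]
    positivity
  · rw [← hN] at h0
    have : (N * lam) * N ≤ (δ * M) * N := by nlinarith [key]
    linarith [le_of_mul_le_mul_right this h0]

/-- Proposition 2.8(i): if `A_n = (γ'_n/γ_n) A` with `Σ_n |γ'_n − γ_n| < ∞`,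
then for every `ρ > 0` the series `Σ_n sup_{‖y‖≤ρ} ‖J_{γ_n A_n} y − J_{γ_n A} y‖`
converges. -/
theorem resolvent_approx_scaled {H : Type*} [NormedAddCommGroup H]
    [InnerProductSpace ℝ H] [CompleteSpace H]
    (A : H → Set H) (hA : IsMaximalMonotone A)
    (β ε : ℝ) (hβ : 0 < β) (hε : ε ∈ Set.Ioo (0 : ℝ) (2 * β))
    (γ : ℕ → ℝ) (hγ : ∀ n, γ n ∈ Set.Icc ε (2 * β - ε))
    (γ' : ℕ → ℝ) (hγ' : ∀ n, γ' n ∈ Set.Ioo (0 : ℝ) (2 * β))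
    (hsum : Summable fun n => |γ' n - γ n|)
    -- `J n` is the resolvent of index `γ_n` of `A_n = (γ'_n/γ_n) • A`
    (J : ℕ → H → H)
    (hJ : ∀ n, IsResolvent (fun w => (γ' n / γ n) • A w) (γ n) (J n))
    -- `J₀ n` is the resolvent of index `γ_n` of `A`
    (J₀ : ℕ → H → H) (hJ₀ : ∀ n, IsResolvent A (γ n) (J₀ n)) :
    ∀ ρ : ℝ, 0 < ρ → ∃ s : ℕ → ℝ, Summable s ∧
      ∀ n, ∀ y : H, ‖y‖ ≤ ρ → ‖J n y - J₀ n y‖ ≤ s n := by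
  intro ρ hρ
  obtain ⟨mono, -⟩ := hA
  set x₀ := J₀ 0 0 with hx₀
  set w₀ : H := (γ 0)⁻¹ • (0 - x₀) with hw₀def
  have hw₀ : w₀ ∈ A x₀ := hJ₀ 0 0
  set C : ℝ := 2 * ρ + 2 * ‖x₀‖ + 2 * β * ‖w₀‖ with hC
  have hC0 : 0 ≤ C := by positivity
  refine ⟨fun n => |γ' n - γ n| * (C / ε), hsum.mul_right _, ?_⟩
  intro n y hy
  have hγn : 0 < γ n := lt_of_lt_of_le hε.1 (hγ n).1
  have hγ'n : 0 < γ' n := (hγ' n).1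
  -- J n is the resolvent of A with parameter γ' n
  obtain ⟨a, ha, haa⟩ := hJ n y
  have hsc : (γ n / γ' n) * (γ' n / γ n) = 1 := by field_simp
  have ha' : (γ' n)⁻¹ • (y - J n y) ∈ A (J n y) := by
    have haval : a = (γ' n)⁻¹ • (y - J n y) := by
      calc a = ((γ n / γ' n) * (γ' n / γ n)) • a := by rw [hsc, one_smul]
        _ = (γ n / γ' n) • ((γ' n / γ n) • a) := by rw [smul_smul]
        _ = (γ n / γ' n) • ((γ n)⁻¹ • (y - J n y)) := by rw [show (γ' n / γ n) • a = (γ n)⁻¹ • (y - J n y) from haa]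
        _ = (γ' n)⁻¹ • (y - J n y) := by
            rw [smul_smul]; congr 1; field_simp
    rwa [haval] at ha
  have hq := hJ₀ n y
  have hdiff := res_diff mono hγ'n hγn ha' hq
  -- bound ‖y - J₀ n y‖ by C
  have hb := res_bound mono hw₀ hγn hq
  have hyx : ‖y - x₀‖ ≤ ρ + ‖x₀‖ := (norm_sub_le _ _).trans (by linarith)
  have hγup : γ n ≤ 2 * β := (hγ n).2.trans (by linarith [hε.1])
  have hqx : ‖J₀ n y - x₀‖ ≤ ρ + ‖x₀‖ + 2 * β * ‖w₀‖ := by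
    have : γ n * ‖w₀‖ ≤ 2 * β * ‖w₀‖ :=
      mul_le_mul_of_nonneg_right hγup (norm_nonneg _)
    linarith
  have hyq : ‖y - J₀ n y‖ ≤ C := by
    have h1 : ‖y - J₀ n y‖ ≤ ‖y - x₀‖ + ‖x₀ - J₀ n y‖ := norm_sub_le_norm_sub_add_norm_sub _ _ _
    rw [norm_sub_rev x₀] at h1
    rw [hC]; linarith
  calc ‖J n y - J₀ n y‖ ≤ |γ' n - γ n| / γ n * ‖y - J₀ n y‖ := hdiff
    _ ≤ |γ' n - γ n| / ε * C := by
        apply mul_le_mul _ hyq (norm_nonneg _) (div_nonneg (abs_nonneg _) hε.1.le)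
        exact div_le_div_of_nonneg_left (abs_nonneg _) hε.1 (hγ n).1
    _ = |γ' n - γ n| * (C / ε) := by ring
end

section
/- Let H be a real Hilbert space, let A : H → 2^H be maximal monotone, let ε ∈ (0, 2β) and β > 0, and let (γ_n) be a sequence in [ε, 2β−ε]. Suppose (μ_n) is a sequence in (0, +∞) with Σ_n μ_n < +∞, and set A_n = ^{μ_n}A, the Yosida approximation of A of index μ_n. Then for every ρ > 0, Σ_{n∈ℕ} sup_{‖y‖≤ρ} ‖J_{γ_n A_n} y − J_{γ_n A} y‖ < +∞. -/
open scoped RealInnerProductSpace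
open Pointwise

/-- If `a ≥ 0`, `c ≥ 0` and `a * a ≤ a * c` then `a ≤ c`. -/
lemma aux_div_trick {a c : ℝ} (ha : 0 ≤ a) (hc : 0 ≤ c) (h : a * a ≤ a * c) :
    a ≤ c := by
  rcases ha.eq_or_lt with h0 | h0
  · simpa [← h0] using hc
  · exact le_of_mul_le_mul_left h h0

/-- If `t ≥ 0`, `c₁, c₂ ≥ 0` and `t² ≤ c₁ t + c₂` then `t ≤ 1 + c₁ + c₂`. -/
lemma aux_quad_bound {t c₁ c₂ : ℝ} (_ht : 0 ≤ t) (hc₁ : 0 ≤ c₁) (hc₂ : 0 ≤ c₂)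
    (h : t * t ≤ c₁ * t + c₂) : t ≤ 1 + c₁ + c₂ := by
  by_cases h1 : t ≤ 1
  · linarith
  · push_neg at h1
    have h2 : c₂ ≤ c₂ * t := le_mul_of_one_le_right hc₂ h1.le
    have h3 : t * t ≤ (c₁ + c₂) * t := by nlinarith
    have h4 : t ≤ c₁ + c₂ := le_of_mul_le_mul_right h3 (by linarith)
    linarith

set_option maxHeartbeats 1000000 in
/-- Proposition 2.8(ii): if `A_n = ^{μ_n}A` is the Yosida approximation of `A`
of index `μ_n` with `Σ_n μ_n < ∞`, then for every `ρ > 0` the series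
`Σ_n sup_{‖y‖≤ρ} ‖J_{γ_n A_n} y − J_{γ_n A} y‖` converges. -/
theorem resolvent_approx_yosida {H : Type*} [NormedAddCommGroup H]
    [InnerProductSpace ℝ H] [CompleteSpace H]
    (A : H → Set H) (hA : IsMaximalMonotone A)
    (β ε : ℝ) (hβ : 0 < β) (hε : ε ∈ Set.Ioo (0 : ℝ) (2 * β))
    (γ : ℕ → ℝ) (hγ : ∀ n, γ n ∈ Set.Icc ε (2 * β - ε))
    (μ : ℕ → ℝ) (hμ : ∀ n, 0 < μ n) (hμsum : Summable μ)
    -- `Jμ n` is the resolvent of index `μ_n` of `A`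
    (Jμ : ℕ → H → H) (hJμ : ∀ n, IsResolvent A (μ n) (Jμ n))
    -- `J n` is the resolvent of index `γ_n` of the Yosida approximation
    -- `A_n = ^{μ_n}A : w ↦ (μ_n)⁻¹ • (w − J_{μ_n A} w)`
    (J : ℕ → H → H)
    (hJ : ∀ n, IsResolvent (fun w => ({(μ n)⁻¹ • (w - Jμ n w)} : Set H)) (γ n) (J n))
    -- `J₀ n` is the resolvent of index `γ_n` of `A`
    (J₀ : ℕ → H → H) (hJ₀ : ∀ n, IsResolvent A (γ n) (J₀ n)) :
    ∀ ρ : ℝ, 0 < ρ → ∃ s : ℕ → ℝ, Summable s ∧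
      ∀ n, ∀ y : H, ‖y‖ ≤ ρ → ‖J n y - J₀ n y‖ ≤ s n := by
  obtain ⟨mono, -⟩ := hA
  obtain ⟨hε0, hε2β⟩ := hε
  intro ρ hρ
  -- a reference point in the graph of `A`
  set x₀ : H := J₀ 0 0 with hx₀def
  set u₀ : H := (γ 0)⁻¹ • ((0:H) - x₀) with hu₀def
  have hu₀ : u₀ ∈ A x₀ := hJ₀ 0 0
  set X : ℝ := ‖x₀‖ with hXdef
  set U : ℝ := ‖u₀‖ with hUdef
  have hX : 0 ≤ X := norm_nonneg _
  have hU : 0 ≤ U := norm_nonneg _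
  set K : ℝ := 1 + (X + 2*β*U) + 2*β*U*X with hKdef
  have hK0 : 0 ≤ K := by positivity
  refine ⟨fun n => μ n * ((2*ρ + K)/ε), hμsum.mul_right _, ?_⟩
  intro n y hy
  -- notation
  have hγn := hγ n
  have hg0 : 0 < γ n := lt_of_lt_of_le hε0 hγn.1
  have hm0 : 0 < μ n := hμ n
  have hg2β : γ n ≤ 2*β := by linarith [hγn.2]
  -- resolvent equation for `J n` at a point `w`
  have hres : ∀ w : H, J n w - Jμ n (J n w) = (μ n / γ n) • (w - J n w) := by
    intro w
    have h1 : (γ n)⁻¹ • (w - J n w) = (μ n)⁻¹ • (J n w - Jμ n (J n w)) :=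
      Set.mem_singleton_iff.mp (hJ n w)
    have h2 := congrArg (fun z => (μ n) • z) h1
    simp only [smul_smul] at h2
    rw [mul_inv_cancel₀ hm0.ne', one_smul] at h2
    rw [← h2, div_eq_mul_inv]
  -- nonexpansiveness of `Jμ n`
  have jne : ∀ w w' : H, ‖Jμ n w - Jμ n w'‖ ≤ ‖w - w'‖ := by
    intro w w'
    have h1 := mono (Jμ n w) (Jμ n w') _ _ (hJμ n w) (hJμ n w')
    set d : H := Jμ n w - Jμ n w' with hd
    have h2 : (μ n)⁻¹ • (w - Jμ n w) - (μ n)⁻¹ • (w' - Jμ n w')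
        = (μ n)⁻¹ • ((w - w') - d) := by
      rw [hd, ← smul_sub]; congr 1; abel
    rw [h2, real_inner_smul_right] at h1
    have h3 : 0 ≤ ⟪d, (w - w') - d⟫ :=
      nonneg_of_mul_nonneg_right h1 (inv_pos.mpr hm0)
    rw [inner_sub_right, real_inner_self_eq_norm_mul_norm] at h3
    have h4 : ‖d‖ * ‖d‖ ≤ ⟪d, w - w'⟫ := by linarith
    exact aux_div_trick (norm_nonneg d) (norm_nonneg _)
      (h4.trans (real_inner_le_norm d (w - w')))
  -- monotonicity of `Id - Jμ n`
  have Bmono : ∀ w w' : H, 0 ≤ ⟪w - w', (w - Jμ n w) - (w' - Jμ n w')⟫ := by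
    intro w w'
    have h2 : (w - Jμ n w) - (w' - Jμ n w') = (w - w') - (Jμ n w - Jμ n w') := by abel
    rw [h2, inner_sub_right, real_inner_self_eq_norm_mul_norm]
    have h3 : ⟪w - w', Jμ n w - Jμ n w'⟫ ≤ ‖w - w'‖ * ‖Jμ n w - Jμ n w'‖ :=
      real_inner_le_norm _ _
    have h4 := jne w w'
    nlinarith [norm_nonneg (w - w')]
  -- `J n` is nonexpansive-type: ‖J n y − J n 0‖ ≤ ‖y‖
  have firm : ‖J n y - J n 0‖ ≤ ‖y‖ := by
    have h1 := Bmono (J n y) (J n 0)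
    rw [hres y, hres 0] at h1
    have h2 : (μ n / γ n) • (y - J n y) - (μ n / γ n) • ((0:H) - J n 0)
        = (μ n / γ n) • (y - (J n y - J n 0)) := by
      rw [← smul_sub]; congr 1; abel
    rw [h2, real_inner_smul_right] at h1
    have h3 : 0 ≤ ⟪J n y - J n 0, y - (J n y - J n 0)⟫ :=
      nonneg_of_mul_nonneg_right h1 (by positivity)
    rw [inner_sub_right, real_inner_self_eq_norm_mul_norm] at h3
    refine aux_div_trick (norm_nonneg _) (norm_nonneg _) ?_
    calc ‖J n y - J n 0‖ * ‖J n y - J n 0‖ ≤ ⟪J n y - J n 0, y⟫ := by linarith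
      _ ≤ ‖J n y - J n 0‖ * ‖y‖ := real_inner_le_norm _ _
  -- uniform bound on ‖J n 0‖
  have hp'K : ‖J n 0‖ ≤ K := by
    set p' : H := J n 0 with hp'
    -- Yosida bound at x₀
    have hv : (μ n)⁻¹ • (x₀ - Jμ n x₀) ∈ A (Jμ n x₀) := hJμ n x₀
    set v : H := (μ n)⁻¹ • (x₀ - Jμ n x₀) with hvdef
    have hxv : x₀ - Jμ n x₀ = (μ n) • v := by
      rw [hvdef, smul_smul, mul_inv_cancel₀ hm0.ne', one_smul]
    have hvU : ‖v‖ ≤ U := by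
      have h1 := mono x₀ (Jμ n x₀) u₀ v hu₀ hv
      rw [hxv, real_inner_smul_left] at h1
      have h2 : 0 ≤ ⟪v, u₀ - v⟫ := nonneg_of_mul_nonneg_right h1 hm0
      rw [inner_sub_right, real_inner_self_eq_norm_mul_norm] at h2
      refine aux_div_trick (norm_nonneg _) hU ?_
      calc ‖v‖ * ‖v‖ ≤ ⟪v, u₀⟫ := by linarith
        _ ≤ ‖v‖ * U := real_inner_le_norm _ _
    -- monotonicity inequality at (p', x₀)
    have h1 := Bmono p' x₀
    rw [hres 0, hxv] at h1
    have h2 : (μ n / γ n) • ((0:H) - p') - (μ n) • v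
        = (μ n) • ((γ n)⁻¹ • ((0:H) - p') - v) := by
      simp only [smul_sub, smul_smul, div_eq_mul_inv]
    rw [h2, real_inner_smul_right] at h1
    have h3 : 0 ≤ ⟪p' - x₀, (γ n)⁻¹ • ((0:H) - p') - v⟫ :=
      nonneg_of_mul_nonneg_right h1 hm0
    rw [inner_sub_right, real_inner_smul_right] at h3
    have h4 : ⟪p' - x₀, (0:H) - p'⟫ = -(⟪p' - x₀, p'⟫) := by
      rw [zero_sub, inner_neg_right]
    have h5 : ⟪p' - x₀, p'⟫ = ‖p'‖ * ‖p'‖ - ⟪x₀, p'⟫ := by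
      rw [inner_sub_left, real_inner_self_eq_norm_mul_norm]
    have h6 : ⟪x₀, p'⟫ ≤ X * ‖p'‖ := real_inner_le_norm _ _
    have h7 : -(‖p' - x₀‖ * ‖v‖) ≤ ⟪p' - x₀, v⟫ :=
      neg_le_of_neg_le (by simpa using (real_inner_le_norm (p' - x₀) (-v)).trans (le_of_eq (by rw [norm_neg])))
    have h8 : ‖p' - x₀‖ ≤ ‖p'‖ + X := norm_sub_le _ _
    have h9 : ‖p' - x₀‖ * ‖v‖ ≤ (‖p'‖ + X) * U := by
      apply mul_le_mul h8 hvU (norm_nonneg _) (by positivity)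
    -- combine: γ⁻¹(‖p'‖² − ⟪x₀,p'⟫) ≤ -⟪p'−x₀,v⟫ ≤ (‖p'‖+X)U
    have h10 : (γ n)⁻¹ * (‖p'‖ * ‖p'‖ - ⟪x₀, p'⟫) ≤ (‖p'‖ + X) * U := by
      rw [h4] at h3
      have := h3
      nlinarith [inv_pos.mpr hg0]
    have h11 : ‖p'‖ * ‖p'‖ - ⟪x₀, p'⟫ ≤ γ n * ((‖p'‖ + X) * U) := by
      have := mul_le_mul_of_nonneg_left h10 hg0.le
      rw [← mul_assoc, mul_inv_cancel₀ hg0.ne', one_mul] at this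
      exact this
    have hgU : γ n * ((‖p'‖ + X) * U) ≤ 2*β*((‖p'‖ + X) * U) :=
      mul_le_mul_of_nonneg_right hg2β (mul_nonneg (by positivity) hU)
    have h12 : ‖p'‖ * ‖p'‖ ≤ (X + 2*β*U) * ‖p'‖ + 2*β*U*X := by nlinarith
    exact aux_quad_bound (norm_nonneg _) (by positivity) (by positivity) h12
  -- bound on ‖y − J n y‖
  have hyp : ‖y - J n y‖ ≤ 2*ρ + K := by
    have htr : ‖J n y‖ ≤ ‖J n y - J n 0‖ + ‖J n 0‖ := by
      simpa using norm_add_le (J n y - J n 0) (J n 0)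
    have h1 := norm_sub_le y (J n y)
    have h2 : ‖J n y - J n 0‖ ≤ ρ := firm.trans hy
    linarith [hp'K]
  -- main comparison: ‖J n y − J₀ n y‖ ≤ ‖J n y − Jμ n (J n y)‖
  set p : H := J n y with hp
  set q : H := J₀ n y with hq
  set r : H := Jμ n p with hr
  have hur : (γ n)⁻¹ • (y - p) ∈ A r := by
    have h1 : (γ n)⁻¹ • (y - p) = (μ n)⁻¹ • (p - r) :=
      Set.mem_singleton_iff.mp (hJ n y)
    rw [h1]; exact hJμ n p
  have huq : (γ n)⁻¹ • (y - q) ∈ A q := hJ₀ n y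
  have hmono := mono r q _ _ hur huq
  have h1 : (γ n)⁻¹ • (y - p) - (γ n)⁻¹ • (y - q) = (γ n)⁻¹ • (q - p) := by
    rw [← smul_sub]; congr 1; abel
  rw [h1, real_inner_smul_right] at hmono
  have h2 : 0 ≤ ⟪r - q, q - p⟫ := nonneg_of_mul_nonneg_right hmono (inv_pos.mpr hg0)
  have h3 : ⟪p - q, r - q⟫ ≤ 0 := by
    have : ⟪r - q, q - p⟫ = -⟪p - q, r - q⟫ := by
      rw [real_inner_comm]; rw [show q - p = -(p - q) by abel, inner_neg_left]
    linarith [this ▸ h2]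
  have h4 : ‖p - q‖ ≤ ‖p - r‖ := by
    have h5 : ‖p - q‖ * ‖p - q‖ = ⟪p - q, p - r⟫ + ⟪p - q, r - q⟫ := by
      rw [← inner_add_right, show (p - r) + (r - q) = p - q by abel,
        real_inner_self_eq_norm_mul_norm]
    refine aux_div_trick (norm_nonneg _) (norm_nonneg _) ?_
    calc ‖p - q‖ * ‖p - q‖ ≤ ⟪p - q, p - r⟫ := by linarith
      _ ≤ ‖p - q‖ * ‖p - r‖ := real_inner_le_norm _ _
  have h6 : ‖p - r‖ = (μ n / γ n) * ‖y - p‖ := by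
    rw [show p - r = (μ n / γ n) • (y - p) from hres y, norm_smul,
      Real.norm_eq_abs, abs_of_pos (by positivity)]
  have h7 : μ n / γ n ≤ μ n / ε := by
    apply div_le_div_of_nonneg_left hm0.le hε0 hγn.1
  calc ‖J n y - J₀ n y‖ = ‖p - q‖ := rfl
    _ ≤ ‖p - r‖ := h4
    _ = (μ n / γ n) * ‖y - p‖ := h6
    _ ≤ (μ n / ε) * (2*ρ + K) := by
        apply mul_le_mul h7 hyp (norm_nonneg _) (by positivity)
    _ = μ n * ((2*ρ + K)/ε) := by ring
end

section
/- Let H be a real Hilbert space, let A : H → 2^H be maximal monotone, let (A_n) be a sequence of maximal monotone operators on H, and let γ > 0. Suppose that for every ϱ ≥ ‖J_{γA} 0‖ · max{1, 1/γ}, one has Σ_{n∈ℕ} haus_ϱ(A, A_n) < +∞, where haus_ϱ denotes the ϱ-Hausdorff distance between operators. Then for every ρ > 0, Σ_{n∈ℕ} sup_{‖y‖≤ρ} ‖J_{γ A_n} y − J_{γ A} y‖ < +∞. -/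
open scoped RealInnerProductSpace
open Pointwise

/-- Distance of `z ∈ H × H` to the graph of `A`, in the product Hilbert
space `H × H` (Euclidean product distance), valued in `ℝ≥0∞`. -/
noncomputable def graphDist {H : Type*} [NormedAddCommGroup H]
    [InnerProductSpace ℝ H] (A : H → Set H) (z : H × H) : ENNReal :=
  ⨅ (w : H × H) (_ : w.2 ∈ A w.1),
    ENNReal.ofReal (Real.sqrt (‖z.1 - w.1‖ ^ 2 + ‖z.2 - w.2‖ ^ 2))

/-- The `ϱ`-Hausdorff distance between the set-valued operators `A` and `B`:
`max { sup_{z ∈ E_ϱ ∩ gra B} d_{gra A}(z), sup_{z ∈ E_ϱ ∩ gra A} d_{gra B}(z) }`,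
where `E_ϱ = {(x,y) : max(‖x‖,‖y‖) ≤ ϱ}`. -/
noncomputable def hausDistOp {H : Type*} [NormedAddCommGroup H]
    [InnerProductSpace ℝ H] (ϱ : ℝ) (A B : H → Set H) : ENNReal :=
  max (⨆ (z : H × H) (_ : max ‖z.1‖ ‖z.2‖ ≤ ϱ ∧ z.2 ∈ B z.1), graphDist A z)
      (⨆ (z : H × H) (_ : max ‖z.1‖ ‖z.2‖ ≤ ϱ ∧ z.2 ∈ A z.1), graphDist B z)

lemma resolvent_nonexp {H : Type*} [NormedAddCommGroup H] [InnerProductSpace ℝ H]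
    {A : H → Set H} (hA : IsMonotoneOp A) {γ : ℝ} (hγ : 0 < γ)
    {J : H → H} (hJ : IsResolvent A γ J) (a b : H) :
    ‖J a - J b‖ ≤ ‖a - b‖ := by
  have h := hA (J a) (J b) _ _ (hJ a) (hJ b)
  have heq : γ⁻¹ • (a - J a) - γ⁻¹ • (b - J b) = γ⁻¹ • ((a - b) - (J a - J b)) := by
    rw [← smul_sub]; congr 1; abel
  rw [heq, real_inner_smul_right, inner_sub_right, real_inner_self_eq_norm_sq] at h
  have hkey : ‖J a - J b‖ ^ 2 ≤ ⟪J a - J b, a - b⟫ := by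
    nlinarith [inv_pos.mpr hγ, mul_pos (inv_pos.mpr hγ) hγ]
  have h2 : ⟪J a - J b, a - b⟫ ≤ ‖J a - J b‖ * ‖a - b‖ := real_inner_le_norm _ _
  nlinarith [norm_nonneg (J a - J b), norm_nonneg (a - b)]

lemma resolvent_fix {H : Type*} [NormedAddCommGroup H] [InnerProductSpace ℝ H]
    {A : H → Set H} (hA : IsMonotoneOp A) {γ : ℝ} (hγ : 0 < γ)
    {J : H → H} (hJ : IsResolvent A γ J) {q v : H} (hv : v ∈ A q) :
    J (q + γ • v) = q := by
  suffices hgen : ∀ x : H, γ⁻¹ • (q + γ • v - x) ∈ A x → x = q from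
    hgen _ (hJ (q + γ • v))
  intro x hx
  have h := hA x q _ v hx hv
  have heq : γ⁻¹ • (q + γ • v - x) - v = γ⁻¹ • (q - x) := by
    rw [smul_sub, smul_add, smul_smul, inv_mul_cancel₀ hγ.ne', one_smul, smul_sub]
    abel
  rw [heq] at h
  have h2 : (q - x) = -(x - q) := by abel
  rw [h2, smul_neg, inner_neg_right, real_inner_smul_right,
    real_inner_self_eq_norm_sq] at h
  have h4 : γ⁻¹ * ‖x - q‖ ^ 2 = 0 := le_antisymm (by linarith) (by positivity)
  have h5 : ‖x - q‖ ^ 2 = 0 := by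
    rcases mul_eq_zero.mp h4 with h'|h'
    · exact absurd h' (inv_ne_zero hγ.ne')
    · exact h'
  exact sub_eq_zero.mp (norm_eq_zero.mp (pow_eq_zero_iff two_ne_zero |>.mp h5))

/-- Proposition 2.8(iii): if `Σ_n haus_ϱ(A, A_n) < ∞` for every
`ϱ ≥ ‖J_{γA} 0‖ max{1, 1/γ}`, then for every `ρ > 0` the series
`Σ_n sup_{‖y‖≤ρ} ‖J_{γ A_n} y − J_{γ A} y‖` converges. -/
theorem resolvent_approx_haus {H : Type*} [NormedAddCommGroup H]
    [InnerProductSpace ℝ H] [CompleteSpace H]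
    (A : H → Set H) (hA : IsMaximalMonotone A)
    (An : ℕ → H → Set H) (hAn : ∀ n, IsMaximalMonotone (An n))
    (γ : ℝ) (hγ : 0 < γ)
    (J₀ : H → H) (hJ₀ : IsResolvent A γ J₀)
    (J : ℕ → H → H) (hJ : ∀ n, IsResolvent (An n) γ (J n))
    (hhaus : ∀ ϱ : ℝ, ‖J₀ 0‖ * max 1 (1 / γ) ≤ ϱ →
      (∑' n, hausDistOp ϱ A (An n)) < ⊤) :
    ∀ ρ : ℝ, 0 < ρ → ∃ s : ℕ → ℝ, Summable s ∧
      ∀ n, ∀ y : H, ‖y‖ ≤ ρ → ‖J n y - J₀ y‖ ≤ s n := by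
  intro ρ hρ
  set c : ℝ := ‖J₀ 0‖ with hc
  set ϱ : ℝ := max (c * max 1 (1 / γ)) (max (ρ + c) (γ⁻¹ * (2 * ρ + c))) with hϱdef
  have hϱ : c * max 1 (1 / γ) ≤ ϱ := le_max_left _ _
  have hsum := hhaus ϱ hϱ
  refine ⟨fun n => (2 + γ) * (hausDistOp ϱ A (An n)).toReal, ?_, ?_⟩
  · exact (ENNReal.summable_toReal hsum.ne).mul_left _
  · intro n y hy
    set η : ENNReal := hausDistOp ϱ A (An n) with hηdef
    have hηtop : η ≠ ⊤ := ENNReal.ne_top_of_tsum_ne_top hsum.ne n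
    set p : H := J₀ y with hp
    set u : H := γ⁻¹ • (y - p) with hu
    have hup : u ∈ A p := hJ₀ y
    have hpnorm : ‖p‖ ≤ ϱ := by
      have h1 : ‖p - J₀ 0‖ ≤ ‖y - 0‖ := resolvent_nonexp hA.1 hγ hJ₀ y 0
      rw [sub_zero] at h1
      have : ‖p‖ ≤ ρ + c := by
        calc ‖p‖ ≤ ‖p - J₀ 0‖ + ‖J₀ 0‖ := by
              simpa using norm_add_le (p - J₀ 0) (J₀ 0)
          _ ≤ ρ + c := by rw [hc]; linarith
      exact this.trans ((le_max_left _ _).trans (le_max_right _ _))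
    have hunorm : ‖u‖ ≤ ϱ := by
      have h1 : ‖u‖ = γ⁻¹ * ‖y - p‖ := by
        rw [hu, norm_smul, Real.norm_eq_abs, abs_of_pos (inv_pos.mpr hγ)]
      have h2 : ‖y - p‖ ≤ ‖y‖ + ‖p‖ := norm_sub_le _ _
      have hpb : ‖p‖ ≤ ρ + c := by
        have h1' : ‖p - J₀ 0‖ ≤ ‖y - 0‖ := resolvent_nonexp hA.1 hγ hJ₀ y 0
        rw [sub_zero] at h1'
        calc ‖p‖ ≤ ‖p - J₀ 0‖ + ‖J₀ 0‖ := by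
              simpa using norm_add_le (p - J₀ 0) (J₀ 0)
          _ ≤ ρ + c := by rw [hc]; linarith
      have : ‖u‖ ≤ γ⁻¹ * (2 * ρ + c) := by
        rw [h1]
        exact mul_le_mul_of_nonneg_left (by linarith) (inv_pos.mpr hγ).le
      exact this.trans ((le_max_right _ _).trans (le_max_right _ _))
    have hgd : graphDist (An n) (p, u) ≤ η := by
      refine le_trans ?_ (le_max_right _ _ : _ ≤ η)
      exact le_iSup₂ (f := fun (z : H × H) (_ : max ‖z.1‖ ‖z.2‖ ≤ ϱ ∧ z.2 ∈ A z.1)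
        => graphDist (An n) z) (p, u) ⟨max_le hpnorm hunorm, hup⟩
    -- ε-argument
    refine le_of_forall_pos_le_add ?_
    intro ε hε
    set ε' : ℝ := ε / (2 + γ) with hε'
    have hε'pos : 0 < ε' := div_pos hε (by linarith)
    set t : ℝ := η.toReal + ε' with ht
    have htpos : 0 < t := by
      have := ENNReal.toReal_nonneg (a := η); linarith
    have hlt : graphDist (An n) (p, u) < ENNReal.ofReal t := by
      refine lt_of_le_of_lt hgd ?_
      rw [← ENNReal.ofReal_toReal hηtop]
      exact ENNReal.ofReal_lt_ofReal_iff htpos |>.mpr (by rw [ht]; linarith)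
    rw [graphDist] at hlt
    rw [iInf_lt_iff] at hlt
    obtain ⟨w, hw⟩ := hlt
    rw [iInf_lt_iff] at hw
    obtain ⟨hwmem, hwlt⟩ := hw
    have hd : Real.sqrt (‖p - w.1‖ ^ 2 + ‖u - w.2‖ ^ 2) < t :=
      (ENNReal.ofReal_lt_ofReal_iff htpos).mp hwlt
    set d : ℝ := Real.sqrt (‖p - w.1‖ ^ 2 + ‖u - w.2‖ ^ 2) with hddef
    have hd1 : ‖p - w.1‖ ≤ d := by
      rw [hddef]
      calc ‖p - w.1‖ = Real.sqrt (‖p - w.1‖ ^ 2) := (Real.sqrt_sq (norm_nonneg _)).symm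
        _ ≤ _ := Real.sqrt_le_sqrt (by nlinarith [sq_nonneg ‖u - w.2‖])
    have hd2 : ‖u - w.2‖ ≤ d := by
      rw [hddef]
      calc ‖u - w.2‖ = Real.sqrt (‖u - w.2‖ ^ 2) := (Real.sqrt_sq (norm_nonneg _)).symm
        _ ≤ _ := Real.sqrt_le_sqrt (by nlinarith [sq_nonneg ‖p - w.1‖])
    have hfix : J n (w.1 + γ • w.2) = w.1 := resolvent_fix (hAn n).1 hγ (hJ n) hwmem
    have hyeq : y = p + γ • u := by
      rw [hu, smul_smul, mul_inv_cancel₀ hγ.ne', one_smul]; abel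
    have hchain : ‖J n y - J₀ y‖ ≤ ‖y - (w.1 + γ • w.2)‖ + ‖w.1 - p‖ := by
      calc ‖J n y - J₀ y‖ = ‖J n y - p‖ := rfl
        _ ≤ ‖J n y - J n (w.1 + γ • w.2)‖ + ‖J n (w.1 + γ • w.2) - p‖ := by
            simpa using norm_add_le (J n y - J n (w.1 + γ • w.2)) (J n (w.1 + γ • w.2) - p)
        _ ≤ ‖y - (w.1 + γ • w.2)‖ + ‖w.1 - p‖ := by
            gcongr
            · exact resolvent_nonexp (hAn n).1 hγ (hJ n) y _
            · rw [hfix]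
    have hmid : ‖y - (w.1 + γ • w.2)‖ ≤ ‖p - w.1‖ + γ * ‖u - w.2‖ := by
      have heq : y - (w.1 + γ • w.2) = (p - w.1) + γ • (u - w.2) := by
        rw [hyeq, smul_sub]; abel
      rw [heq]
      calc ‖(p - w.1) + γ • (u - w.2)‖ ≤ ‖p - w.1‖ + ‖γ • (u - w.2)‖ := norm_add_le _ _
        _ = ‖p - w.1‖ + γ * ‖u - w.2‖ := by
            rw [norm_smul, Real.norm_eq_abs, abs_of_pos hγ]
    have hwp : ‖w.1 - p‖ = ‖p - w.1‖ := norm_sub_rev _ _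
    have hfinal : ‖J n y - J₀ y‖ ≤ (2 + γ) * d := by
      have := hchain.trans (by linarith [hmid] : ‖y - (w.1 + γ • w.2)‖ + ‖w.1 - p‖
        ≤ 2 * ‖p - w.1‖ + γ * ‖u - w.2‖)
      nlinarith [hd1, hd2, hγ]
    calc ‖J n y - J₀ y‖ ≤ (2 + γ) * d := hfinal
      _ ≤ (2 + γ) * t := by nlinarith
      _ = (2 + γ) * η.toReal + ε := by
          rw [ht, hε', mul_add, mul_div_cancel₀ _ (by linarith : (2:ℝ) + γ ≠ 0)]
end

section
/- Let H_1,...,H_m and G_1,...,G_p be real Hilbert spaces, for each k ∈ {1,...,p} and i ∈ {1,...,m} let L_{ki} : H_i → G_k be a bounded linear operator, assume min_{1≤k≤p} Σ_{i=1}^m ‖L_{ki}‖² > 0, and set M_{ij} = Σ_{k=1}^p L_{ki}* L_{kj} for all i, j ∈ {1,...,m}. Then for all (x_1,...,x_m) ∈ H_1 × ... × H_m, Σ_{i=1}^m Σ_{j=1}^m ⟨M_{ij} x_j, x_i⟩ ≥ β Σ_{i=1}^m ‖Σ_{j=1}^m M_{ij} x_j‖² with β = ( Σ_{k=1}^p Σ_{i=1}^m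 ‖L_{ki}‖² )^{-1}. -/
open scoped RealInnerProductSpace

/-- Proposition 3.7: for `M_{ij} = Σ_k L_{ki}* L_{kj}`, the cocoercivity
inequality for the linear coupling operators holds with
`β = (Σ_k Σ_i ‖L_{ki}‖²)⁻¹`. -/
theorem composite_linear_coupling_cocoercive {m p : ℕ} (hp : 0 < p)
    (H : Fin m → Type*) [∀ i, NormedAddCommGroup (H i)]
    [∀ i, InnerProductSpace ℝ (H i)] [∀ i, CompleteSpace (H i)]
    (G : Fin p → Type*) [∀ k, NormedAddCommGroup (G k)]
    [∀ k, InnerProductSpace ℝ (G k)] [∀ k, CompleteSpace (G k)]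
    (L : ∀ (k : Fin p) (i : Fin m), H i →L[ℝ] G k)
    -- min_k Σ_i ‖L_{ki}‖² > 0
    (hL : ∀ k, 0 < ∑ i, ‖L k i‖ ^ 2)
    (M : ∀ i j : Fin m, H j →L[ℝ] H i)
    (hM : ∀ i j, M i j = ∑ k, (ContinuousLinearMap.adjoint (L k i)).comp (L k j)) :
    ∀ x : ∀ i, H i,
      (∑ k, ∑ i, ‖L k i‖ ^ 2)⁻¹ * ∑ i, ‖∑ j, M i j (x j)‖ ^ 2
        ≤ ∑ i, ∑ j, ⟪M i j (x j), x i⟫ := by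
  intro x
  set y : ∀ k, G k := fun k => ∑ i, L k i (x i) with hy
  have hS : 0 < ∑ k, ∑ i, ‖L k i‖ ^ 2 :=
    Finset.sum_pos (fun k _ => hL k) (by simp [Finset.univ_nonempty_iff, Fin.pos_iff_nonempty.mp hp])
  have hRHS : ∑ i, ∑ j, ⟪M i j (x j), x i⟫ = ∑ k, ‖y k‖ ^ 2 := by
    have : ∀ i j, ⟪M i j (x j), x i⟫ = ∑ k, ⟪L k j (x j), L k i (x i)⟫ := by
      intro i j
      simp [hM, ContinuousLinearMap.sum_apply, sum_inner,
        ContinuousLinearMap.adjoint_inner_left]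
    simp only [this]
    rw [show (∑ i, ∑ j, ∑ k, (⟪L k j (x j), L k i (x i)⟫ : ℝ))
        = ∑ i, ∑ k, ∑ j, ⟪L k j (x j), L k i (x i)⟫ from
      Finset.sum_congr rfl fun i _ => Finset.sum_comm, Finset.sum_comm]
    refine Finset.sum_congr rfl fun k _ => ?_
    rw [show (‖y k‖ : ℝ) ^ 2 = ⟪y k, y k⟫ from (real_inner_self_eq_norm_sq _).symm]
    simp only [hy, inner_sum, sum_inner]
  rw [hRHS]
  -- Σ_j M i j (x j) = Σ_k (L k i)* (y k)
  have hMx : ∀ i, ∑ j, M i j (x j) = ∑ k, ContinuousLinearMap.adjoint (L k i) (y k) := by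
    intro i
    simp only [hM, ContinuousLinearMap.sum_apply, ContinuousLinearMap.comp_apply, hy,
      map_sum]
    rw [Finset.sum_comm]
  have key : ∑ i, ‖∑ j, M i j (x j)‖ ^ 2
      ≤ (∑ k, ∑ i, ‖L k i‖ ^ 2) * ∑ k, ‖y k‖ ^ 2 := by
    have h1 : ∀ i, ‖∑ j, M i j (x j)‖ ^ 2 ≤ (∑ k, ‖L k i‖ ^ 2) * ∑ k, ‖y k‖ ^ 2 := by
      intro i
      have htri : ‖∑ j, M i j (x j)‖ ≤ ∑ k, ‖L k i‖ * ‖y k‖ := by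
        rw [hMx i]
        refine (norm_sum_le _ _).trans (Finset.sum_le_sum fun k _ => ?_)
        calc ‖ContinuousLinearMap.adjoint (L k i) (y k)‖
            ≤ ‖ContinuousLinearMap.adjoint (L k i)‖ * ‖y k‖ :=
              ContinuousLinearMap.le_opNorm _ _
          _ = ‖L k i‖ * ‖y k‖ := by rw [ContinuousLinearMap.adjoint.norm_map]
      calc ‖∑ j, M i j (x j)‖ ^ 2 ≤ (∑ k, ‖L k i‖ * ‖y k‖) ^ 2 := by
            apply pow_le_pow_left₀ (norm_nonneg _) htri
        _ ≤ (∑ k, ‖L k i‖ ^ 2) * ∑ k, ‖y k‖ ^ 2 :=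
            Finset.sum_mul_sq_le_sq_mul_sq Finset.univ _ _
    calc ∑ i, ‖∑ j, M i j (x j)‖ ^ 2
        ≤ ∑ i, (∑ k, ‖L k i‖ ^ 2) * ∑ k, ‖y k‖ ^ 2 :=
          Finset.sum_le_sum fun i _ => h1 i
      _ = (∑ k, ∑ i, ‖L k i‖ ^ 2) * ∑ k, ‖y k‖ ^ 2 := by
          rw [← Finset.sum_mul, Finset.sum_comm]
  rw [inv_mul_le_iff₀ hS]
  linarith [key]
end

section
/- Let H_1,...,H_m and G_1,...,G_p be real Hilbert spaces. For each k ∈ {1,...,p}, let β_k > 0, let T_k : G_k → G_k be β_k-cocoercive, and for each i ∈ {1,...,m} let L_{ki} : H_i → G_k be a bounded linear operator. Assume min_{1≤k≤p} Σ_{i=1}^m ‖L_{ki}‖² > 0 and define B_i : H_1 × ... × H_m → H_i by B_i(x_1,...,x_m) = Σ_{k=1}^p L_{ki}* T_k( Σ_{j=1}^m L_{kj} x_j ). Then the family (B_i)_{1≤i≤m} satisfies the joint cocoercivity inequality with constant β = (1/p) · min_{1≤k≤p} β_k / ( Σ_{i=1}^m ‖L_{ki}‖² ). -/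
open scoped RealInnerProductSpace

/-- Proposition 3.9: if each `T_k : G_k → G_k` is `β_k`-cocoercive, then the
nonlinear coupling operators `B_i : (x_j)_j ↦ Σ_k L_{ki}* T_k(Σ_j L_{kj} x_j)`
satisfy the joint cocoercivity inequality with
`β = (1/p) min_k β_k / (Σ_i ‖L_{ki}‖²)`. -/
theorem nonlinear_coupling_cocoercive {m p : ℕ} (hp : 0 < p)
    (H : Fin m → Type*) [∀ i, NormedAddCommGroup (H i)]
    [∀ i, InnerProductSpace ℝ (H i)] [∀ i, CompleteSpace (H i)]
    (G : Fin p → Type*) [∀ k, NormedAddCommGroup (G k)]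
    [∀ k, InnerProductSpace ℝ (G k)] [∀ k, CompleteSpace (G k)]
    (βk : Fin p → ℝ) (hβk : ∀ k, 0 < βk k)
    (T : ∀ k, G k → G k)
    -- each `T_k` is `β_k`-cocoercive
    (hT : ∀ k, ∀ u v : G k, βk k * ‖T k u - T k v‖ ^ 2 ≤ ⟪u - v, T k u - T k v⟫)
    (L : ∀ (k : Fin p) (i : Fin m), H i →L[ℝ] G k)
    -- min_k Σ_i ‖L_{ki}‖² > 0
    (hL : ∀ k, 0 < ∑ i, ‖L k i‖ ^ 2)
    (B : ∀ i : Fin m, (∀ j, H j) → H i)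
    (hB : ∀ i (x : ∀ j, H j),
      B i x = ∑ k, ContinuousLinearMap.adjoint (L k i) (T k (∑ j, L k j (x j))))
    (β : ℝ)
    (hβ : β = (1 / p) * Finset.univ.inf' ⟨⟨0, hp⟩, Finset.mem_univ _⟩
        (fun k => βk k / ∑ i, ‖L k i‖ ^ 2)) :
    ∀ x y : ∀ j, H j,
      β * ∑ i, ‖B i x - B i y‖ ^ 2 ≤ ∑ i, ⟪B i x - B i y, x i - y i⟫ := by
  intro x y
  set ι := Finset.univ.inf' (α := ℝ) ⟨⟨0, hp⟩, Finset.mem_univ _⟩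
      (fun k => βk k / ∑ i, ‖L k i‖ ^ 2) with hι
  have hιpos : 0 < ι := by
    rw [hι]
    apply Finset.lt_inf'_iff _ |>.2
    intro k _
    exact div_pos (hβk k) (hL k)
  have hβpos : 0 < β := by
    rw [hβ]
    positivity
  set D : ∀ k, G k := fun k => T k (∑ j, L k j (x j)) - T k (∑ j, L k j (y j)) with hD
  have hdiff : ∀ i, B i x - B i y = ∑ k, ContinuousLinearMap.adjoint (L k i) (D k) := by
    intro i
    rw [hB, hB, ← Finset.sum_sub_distrib]
    exact Finset.sum_congr rfl fun k _ => (map_sub _ _ _).symm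
  -- right-hand side
  have hRHS : ∑ k, βk k * ‖D k‖ ^ 2 ≤ ∑ i, ⟪B i x - B i y, x i - y i⟫ := by
    have key : ∑ i, ⟪B i x - B i y, x i - y i⟫
        = ∑ k, ⟪(∑ j, L k j (x j)) - (∑ j, L k j (y j)), D k⟫ := by
      calc ∑ i, ⟪B i x - B i y, x i - y i⟫
          = ∑ i, ∑ k, ⟪ContinuousLinearMap.adjoint (L k i) (D k), x i - y i⟫ := by
            refine Finset.sum_congr rfl fun i _ => ?_
            rw [hdiff i, sum_inner]
        _ = ∑ k, ∑ i, ⟪D k, L k i (x i - y i)⟫ := by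
            rw [Finset.sum_comm]
            exact Finset.sum_congr rfl fun k _ => Finset.sum_congr rfl fun i _ =>
              ContinuousLinearMap.adjoint_inner_left _ _ _
        _ = ∑ k, ⟪(∑ j, L k j (x j)) - (∑ j, L k j (y j)), D k⟫ := by
            refine Finset.sum_congr rfl fun k _ => ?_
            rw [← inner_sum, real_inner_comm, ← Finset.sum_sub_distrib]
            congr 1
            exact Finset.sum_congr rfl fun j _ => map_sub _ _ _
    rw [key]
    exact Finset.sum_le_sum fun k _ => hT k _ _
  refine le_trans ?_ hRHS
  -- left-hand side
  have hLHS : ∑ i, ‖B i x - B i y‖ ^ 2 ≤ p * ∑ k, (∑ i, ‖L k i‖ ^ 2) * ‖D k‖ ^ 2 := by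
    have step : ∀ i, ‖B i x - B i y‖ ^ 2 ≤ p * ∑ k, ‖L k i‖ ^ 2 * ‖D k‖ ^ 2 := by
      intro i
      have h1 : ‖B i x - B i y‖ ≤ ∑ k, ‖L k i‖ * ‖D k‖ := by
        rw [hdiff i]
        refine le_trans (norm_sum_le _ _) (Finset.sum_le_sum fun k _ => ?_)
        calc ‖ContinuousLinearMap.adjoint (L k i) (D k)‖
            ≤ ‖ContinuousLinearMap.adjoint (L k i)‖ * ‖D k‖ :=
              ContinuousLinearMap.le_opNorm _ _
          _ = ‖L k i‖ * ‖D k‖ := by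
              rw [LinearIsometryEquiv.norm_map ContinuousLinearMap.adjoint]
      calc ‖B i x - B i y‖ ^ 2 ≤ (∑ k, ‖L k i‖ * ‖D k‖) ^ 2 := by
            apply pow_le_pow_left₀ (norm_nonneg _) h1 2
        _ ≤ ((Finset.univ : Finset (Fin p)).card : ℝ) * ∑ k, (‖L k i‖ * ‖D k‖) ^ 2 :=
            sq_sum_le_card_mul_sum_sq
        _ = p * ∑ k, ‖L k i‖ ^ 2 * ‖D k‖ ^ 2 := by
            rw [Finset.card_univ, Fintype.card_fin]
            exact congrArg _ (Finset.sum_congr rfl fun k _ => mul_pow _ _ _)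
    calc ∑ i, ‖B i x - B i y‖ ^ 2 ≤ ∑ i, (p : ℝ) * ∑ k, ‖L k i‖ ^ 2 * ‖D k‖ ^ 2 :=
          Finset.sum_le_sum fun i _ => step i
      _ = p * ∑ k, (∑ i, ‖L k i‖ ^ 2) * ‖D k‖ ^ 2 := by
          rw [← Finset.mul_sum, Finset.sum_comm]
          congr 1
          exact Finset.sum_congr rfl fun k _ => by rw [Finset.sum_mul]
  calc β * ∑ i, ‖B i x - B i y‖ ^ 2
      ≤ β * (p * ∑ k, (∑ i, ‖L k i‖ ^ 2) * ‖D k‖ ^ 2) :=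
        mul_le_mul_of_nonneg_left hLHS hβpos.le
    _ = ∑ k, (β * p) * ((∑ i, ‖L k i‖ ^ 2) * ‖D k‖ ^ 2) := by
        rw [← mul_assoc, Finset.mul_sum]
    _ ≤ ∑ k, βk k * ‖D k‖ ^ 2 := by
        refine Finset.sum_le_sum fun k _ => ?_
        have h1 : β * p = ι := by
          rw [hβ]
          field_simp
        have h2 : ι ≤ βk k / ∑ i, ‖L k i‖ ^ 2 :=
          Finset.inf'_le _ (Finset.mem_univ k)
        rw [h1, ← mul_assoc]
        have h3 : ι * (∑ i, ‖L k i‖ ^ 2) ≤ βk k := by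
          rw [← le_div_iff₀ (hL k)]
          exact h2
        exact mul_le_mul_of_nonneg_right h3 (sq_nonneg _)
end

section
/- Let H_1,...,H_m and G_1,...,G_p be real Hilbert spaces. For each k ∈ {1,...,p}, let τ_k > 0, let φ_k : G_k → ℝ be a differentiable convex function whose gradient ∇φ_k is τ_k-Lipschitz continuous, and for each i ∈ {1,...,m} let L_{ki} : H_i → G_k be a bounded linear operator. Assume min_{1≤k≤p} Σ_{i=1}^m ‖L_{ki}‖² > 0 and define B_i : H_1 × ... × H_m → H_i by B_i(x_1,...,x_m) = Σ_{k=1}^p L_{ki}* ∇φ_k( Σ_{j=1}^m L_{kj} x_j ). Then the family (B_i)_{1≤i≤m} satisfies the joint cocoercivity inequality with constant β = ( p · max_{1≤k≤p} τ_k Σ_{i=1}^m ‖L_{ki}‖² )^{-1}. -/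
open scoped RealInnerProductSpace

section BaillonHaddadAux
variable {F : Type*} [NormedAddCommGroup F] [InnerProductSpace ℝ F] [CompleteSpace F]

lemma aux_hasDerivAt (φ : F → ℝ) (g : F → F) (hg : ∀ u, HasGradientAt φ (g u) u)
    (x d : F) (t : ℝ) :
    HasDerivAt (fun s : ℝ => φ (x + s • d)) ⟪g (x + t • d), d⟫ t := by
  have h1 : HasDerivAt (fun s : ℝ => x + s • d) d t := by
    simpa using ((hasDerivAt_id t).smul_const d).const_add x
  have h2 := (hg (x + t • d)).hasFDerivAt.comp_hasDerivAt t h1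
  simp only [InnerProductSpace.toDual_apply_apply] at h2
  exact h2

lemma descent_lemma (φ : F → ℝ) (g : F → F) (hg : ∀ u, HasGradientAt φ (g u) u)
    (τ : ℝ) (hLip : ∀ u v : F, ‖g u - g v‖ ≤ τ * ‖u - v‖) (x y : F) :
    φ y ≤ φ x + ⟪g x, y - x⟫ + τ / 2 * ‖y - x‖ ^ 2 := by
  set d := y - x with hd
  set c : ℝ := ⟪g x, d⟫ with hc
  set f : ℝ → ℝ := fun t => φ (x + t • d) - t * c - τ * t ^ 2 / 2 * ‖d‖ ^ 2 with hf
  have hder : ∀ t : ℝ, HasDerivAt f (⟪g (x + t • d), d⟫ - c - τ * t * ‖d‖ ^ 2) t := by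
    intro t
    have h1 := aux_hasDerivAt φ g hg x d t
    have h2 : HasDerivAt (fun s : ℝ => s * c) c t := by
      simpa using (hasDerivAt_id t).mul_const c
    have h3 : HasDerivAt (fun s : ℝ => τ * s ^ 2 / 2 * ‖d‖ ^ 2) (τ * t * ‖d‖ ^ 2) t := by
      have := (((hasDerivAt_pow 2 t).const_mul τ).div_const 2).mul_const (‖d‖ ^ 2)
      exact this.congr_deriv (by ring)
    exact (h1.sub h2).sub h3
  have hanti : AntitoneOn f (Set.Icc 0 1) := by
    apply antitoneOn_of_deriv_nonpos (convex_Icc 0 1)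
    · exact fun t _ => ((hder t).continuousAt).continuousWithinAt
    · exact fun t _ => ((hder t).differentiableAt).differentiableWithinAt
    · intro t ht
      rw [interior_Icc, Set.mem_Ioo] at ht
      rw [(hder t).deriv]
      have h1 : ⟪g (x + t • d), d⟫ - c = ⟪g (x + t • d) - g x, d⟫ := by
        rw [inner_sub_left, hc]
      rw [h1]
      have h2 : ⟪g (x + t • d) - g x, d⟫ ≤ τ * t * ‖d‖ ^ 2 := by
        calc ⟪g (x + t • d) - g x, d⟫ ≤ ‖g (x + t • d) - g x‖ * ‖d‖ := real_inner_le_norm _ _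
          _ ≤ (τ * ‖x + t • d - x‖) * ‖d‖ := by
              gcongr; exact hLip _ _
          _ = τ * t * ‖d‖ ^ 2 := by
              have : x + t • d - x = t • d := by abel
              rw [this, norm_smul, Real.norm_eq_abs, abs_of_pos ht.1]; ring
      linarith
  have h01 := hanti (Set.mem_Icc.2 ⟨le_refl 0, zero_le_one⟩) (Set.mem_Icc.2 ⟨zero_le_one, le_refl 1⟩) zero_le_one
  simp only [hf, zero_smul, add_zero, zero_mul, one_smul] at h01
  have hxy : x + d = y := by rw [hd]; abel
  rw [hxy] at h01
  nlinarith [h01]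

lemma lower_bound (φ : F → ℝ) (hconv : ConvexOn ℝ Set.univ φ)
    (g : F → F) (hg : ∀ u, HasGradientAt φ (g u) u) (x y : F) :
    φ x + ⟪g x, y - x⟫ ≤ φ y := by
  set d := y - x with hd
  set ψ : ℝ → ℝ := fun t => φ (x + t • d) with hψ
  have hψconv : ConvexOn ℝ Set.univ ψ := by
    have := hconv.comp_affineMap (AffineMap.lineMap x y)
    have heq : ψ = φ ∘ (AffineMap.lineMap x y) := by
      funext t
      simp [hψ, AffineMap.lineMap_apply, hd, add_comm]
    rw [heq]
    simpa using this
  have hder := aux_hasDerivAt φ g hg x d 0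
  simp only [zero_smul, add_zero] at hder
  have := hψconv.le_slope_of_hasDerivAt (Set.mem_univ (0:ℝ)) (Set.mem_univ (1:ℝ)) zero_lt_one hder
  rw [slope_def_field] at this
  simp only [hψ, zero_smul, add_zero, one_smul] at this
  have hxy : x + d = y := by rw [hd]; abel
  rw [hxy] at this
  simp at this
  linarith [this]

lemma key_ineq (φ : F → ℝ) (hconv : ConvexOn ℝ Set.univ φ)
    (g : F → F) (hg : ∀ u, HasGradientAt φ (g u) u)
    (τ : ℝ) (hτ : 0 < τ) (hLip : ∀ u v : F, ‖g u - g v‖ ≤ τ * ‖u - v‖) (x y : F) :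
    φ x + ⟪g x, y - x⟫ + 1 / (2 * τ) * ‖g y - g x‖ ^ 2 ≤ φ y := by
  have hτ' : τ ≠ 0 := ne_of_gt hτ
  set z := y - (τ⁻¹ : ℝ) • (g y - g x) with hz
  have hA := lower_bound φ hconv g hg x z
  have hB := descent_lemma φ g hg τ hLip y z
  have hzy : z - y = -((τ⁻¹ : ℝ) • (g y - g x)) := by rw [hz]; abel
  have hzx : z - x = (y - x) - (τ⁻¹ : ℝ) • (g y - g x) := by rw [hz]; abel
  have e1 : ⟪g y, z - y⟫ = -(τ⁻¹ * ⟪g y, g y - g x⟫) := by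
    rw [hzy, inner_neg_right, inner_smul_right]
  have e2 : τ / 2 * ‖z - y‖ ^ 2 = τ⁻¹ / 2 * ‖g y - g x‖ ^ 2 := by
    rw [hzy, norm_neg, norm_smul]
    rw [Real.norm_eq_abs, abs_of_pos (inv_pos.2 hτ), mul_pow]
    field_simp
  have e3 : ⟪g x, z - x⟫ = ⟪g x, y - x⟫ - τ⁻¹ * ⟪g x, g y - g x⟫ := by
    rw [hzx, inner_sub_right, inner_smul_right]
  have e4 : τ⁻¹ * ⟪g y, g y - g x⟫ - τ⁻¹ * ⟪g x, g y - g x⟫ = τ⁻¹ * ‖g y - g x‖ ^ 2 := by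
    rw [← mul_sub, ← inner_sub_left, real_inner_self_eq_norm_sq]
  have e5 : 1 / (2 * τ) * ‖g y - g x‖ ^ 2 = τ⁻¹ / 2 * ‖g y - g x‖ ^ 2 := by
    field_simp
  rw [e1, e2] at hB
  rw [e3] at hA
  rw [e5]
  linarith [hA.trans hB]

lemma cocoercive (φ : F → ℝ) (hconv : ConvexOn ℝ Set.univ φ)
    (g : F → F) (hg : ∀ u, HasGradientAt φ (g u) u)
    (τ : ℝ) (hτ : 0 < τ) (hLip : ∀ u v : F, ‖g u - g v‖ ≤ τ * ‖u - v‖) (u v : F) :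
    τ⁻¹ * ‖g u - g v‖ ^ 2 ≤ ⟪g u - g v, u - v⟫ := by
  have hτ' : τ ≠ 0 := ne_of_gt hτ
  have h1 := key_ineq φ hconv g hg τ hτ hLip u v
  have h2 := key_ineq φ hconv g hg τ hτ hLip v u
  have e1 : ⟪g u - g v, u - v⟫ = ⟪g u, u - v⟫ - ⟪g v, u - v⟫ := inner_sub_left _ _ _
  have e2 : ⟪g v, u - v⟫ = - ⟪g v, v - u⟫ := by
    rw [← inner_neg_right]; congr 1; abel
  have e2' : ⟪g u, v - u⟫ = - ⟪g u, u - v⟫ := by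
    rw [← inner_neg_right]; congr 1; abel
  have e3 : ‖g v - g u‖ ^ 2 = ‖g u - g v‖ ^ 2 := by rw [← norm_neg]; congr 2; abel
  have e5 : ∀ w : F, 1 / (2 * τ) * ‖w‖ ^ 2 = τ⁻¹ / 2 * ‖w‖ ^ 2 := by
    intro w; field_simp
  rw [e5, e3] at h1
  rw [e5] at h2
  rw [e1, e2]
  linarith [h1, h2, e2']
end BaillonHaddadAux

/-- Corollary 3.11: if each `φ_k : G_k → ℝ` is convex with `τ_k`-Lipschitz
gradient, then the coupling operators
`B_i : (x_j)_j ↦ Σ_k L_{ki}* ∇φ_k(Σ_j L_{kj} x_j)` satisfy the joint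
cocoercivity inequality with `β = (p max_k τ_k Σ_i ‖L_{ki}‖²)⁻¹`. -/
theorem gradient_coupling_cocoercive {m p : ℕ} (hp : 0 < p)
    (H : Fin m → Type*) [∀ i, NormedAddCommGroup (H i)]
    [∀ i, InnerProductSpace ℝ (H i)] [∀ i, CompleteSpace (H i)]
    (G : Fin p → Type*) [∀ k, NormedAddCommGroup (G k)]
    [∀ k, InnerProductSpace ℝ (G k)] [∀ k, CompleteSpace (G k)]
    (τ : Fin p → ℝ) (hτ : ∀ k, 0 < τ k)
    (φ : ∀ k, G k → ℝ) (hφconv : ∀ k, ConvexOn ℝ Set.univ (φ k))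
    -- `gφ k` is the gradient of `φ_k`
    (gφ : ∀ k, G k → G k) (hgφ : ∀ k (u : G k), HasGradientAt (φ k) (gφ k u) u)
    -- `∇φ_k` is `τ_k`-Lipschitz continuous
    (hLip : ∀ k, ∀ u v : G k, ‖gφ k u - gφ k v‖ ≤ τ k * ‖u - v‖)
    (L : ∀ (k : Fin p) (i : Fin m), H i →L[ℝ] G k)
    -- min_k Σ_i ‖L_{ki}‖² > 0
    (hL : ∀ k, 0 < ∑ i, ‖L k i‖ ^ 2)
    (B : ∀ i : Fin m, (∀ j, H j) → H i)
    (hB : ∀ i (x : ∀ j, H j),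
      B i x = ∑ k, ContinuousLinearMap.adjoint (L k i) (gφ k (∑ j, L k j (x j))))
    (β : ℝ)
    (hβ : β = (p * Finset.univ.sup' ⟨⟨0, hp⟩, Finset.mem_univ _⟩
        (fun k => τ k * ∑ i, ‖L k i‖ ^ 2))⁻¹) :
    ∀ x y : ∀ j, H j,
      β * ∑ i, ‖B i x - B i y‖ ^ 2 ≤ ∑ i, ⟪B i x - B i y, x i - y i⟫ := by
  intro x y
  classical
  set M : ℝ := Finset.univ.sup' ⟨⟨0, hp⟩, Finset.mem_univ _⟩
      (fun k => τ k * ∑ i, ‖L k i‖ ^ 2) with hMdef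
  have hMk : ∀ k, τ k * ∑ i, ‖L k i‖ ^ 2 ≤ M := by
    intro k; rw [hMdef]
    exact Finset.le_sup' (fun k => τ k * ∑ i, ‖L k i‖ ^ 2) (Finset.mem_univ k)
  have hMpos : 0 < M :=
    lt_of_lt_of_le (mul_pos (hτ ⟨0, hp⟩) (hL ⟨0, hp⟩)) (hMk ⟨0, hp⟩)
  set u : ∀ k, G k := fun k => ∑ j, L k j (x j) with hu
  set v : ∀ k, G k := fun k => ∑ j, L k j (y j) with hv
  set d : ∀ k, G k := fun k => gφ k (u k) - gφ k (v k) with hd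
  have hBd : ∀ i, B i x - B i y = ∑ k, ContinuousLinearMap.adjoint (L k i) (d k) := by
    intro i
    rw [hB i x, hB i y, ← Finset.sum_sub_distrib]
    exact Finset.sum_congr rfl fun k _ => (map_sub _ _ _).symm
  have hRHS : ∑ i, ⟪B i x - B i y, x i - y i⟫ = ∑ k, ⟪d k, u k - v k⟫ := by
    calc ∑ i, ⟪B i x - B i y, x i - y i⟫
        = ∑ i, ∑ k, ⟪d k, L k i (x i - y i)⟫ := by
          refine Finset.sum_congr rfl fun i _ => ?_
          rw [hBd i, sum_inner]
          exact Finset.sum_congr rfl fun k _ =>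
            ContinuousLinearMap.adjoint_inner_left _ _ _
      _ = ∑ k, ∑ i, ⟪d k, L k i (x i - y i)⟫ := Finset.sum_comm
      _ = ∑ k, ⟪d k, u k - v k⟫ := by
          refine Finset.sum_congr rfl fun k _ => ?_
          rw [← inner_sum]
          congr 1
          simp only [map_sub, Finset.sum_sub_distrib]
          rfl
  have hco : ∀ k, (τ k)⁻¹ * ‖d k‖ ^ 2 ≤ ⟪d k, u k - v k⟫ := fun k =>
    cocoercive (φ k) (hφconv k) (gφ k) (hgφ k) (τ k) (hτ k) (hLip k) (u k) (v k)
  set S : ℝ := ∑ k, (τ k)⁻¹ * ‖d k‖ ^ 2 with hS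
  have hLHS : ∑ i, ‖B i x - B i y‖ ^ 2 ≤ p * M * S := by
    have h1 : ∀ i, ‖B i x - B i y‖ ^ 2 ≤ p * ∑ k, ‖L k i‖ ^ 2 * ‖d k‖ ^ 2 := by
      intro i
      rw [hBd i]
      calc ‖∑ k, ContinuousLinearMap.adjoint (L k i) (d k)‖ ^ 2
          ≤ (∑ k, ‖ContinuousLinearMap.adjoint (L k i) (d k)‖) ^ 2 :=
            pow_le_pow_left₀ (norm_nonneg _) (norm_sum_le _ _) 2
        _ ≤ (Finset.univ.card : ℝ) *
              ∑ k, ‖ContinuousLinearMap.adjoint (L k i) (d k)‖ ^ 2 :=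
            sq_sum_le_card_mul_sum_sq
        _ ≤ p * ∑ k, ‖L k i‖ ^ 2 * ‖d k‖ ^ 2 := by
            rw [Finset.card_univ, Fintype.card_fin]
            gcongr with k hk
            calc ‖ContinuousLinearMap.adjoint (L k i) (d k)‖ ^ 2
                ≤ (‖ContinuousLinearMap.adjoint (L k i)‖ * ‖d k‖) ^ 2 :=
                  pow_le_pow_left₀ (norm_nonneg _) (ContinuousLinearMap.le_opNorm _ _) 2
              _ = ‖L k i‖ ^ 2 * ‖d k‖ ^ 2 := by
                  rw [ContinuousLinearMap.adjoint.norm_map]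
                  ring
    calc ∑ i, ‖B i x - B i y‖ ^ 2
        ≤ ∑ i, (p : ℝ) * ∑ k, ‖L k i‖ ^ 2 * ‖d k‖ ^ 2 :=
          Finset.sum_le_sum fun i _ => h1 i
      _ = p * ∑ k, (∑ i, ‖L k i‖ ^ 2) * ‖d k‖ ^ 2 := by
          rw [← Finset.mul_sum, Finset.sum_comm]
          simp_rw [← Finset.sum_mul]
      _ ≤ p * ∑ k, (M * (τ k)⁻¹) * ‖d k‖ ^ 2 := by
          refine mul_le_mul_of_nonneg_left (Finset.sum_le_sum fun k _ => ?_)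
            (Nat.cast_nonneg p)
          refine mul_le_mul_of_nonneg_right ?_ (by positivity)
          rw [← div_eq_mul_inv, le_div_iff₀ (hτ k), mul_comm]
          exact hMk k
      _ = p * M * S := by
          simp only [hS, mul_assoc, Finset.mul_sum]
  have hpM : (0 : ℝ) < p * M := mul_pos (by exact_mod_cast hp) hMpos
  have hβnn : 0 ≤ β := by rw [hβ]; exact le_of_lt (inv_pos.2 hpM)
  have hSle : S ≤ ∑ k, ⟪d k, u k - v k⟫ := Finset.sum_le_sum fun k _ => hco k
  rw [hRHS]
  calc β * ∑ i, ‖B i x - B i y‖ ^ 2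
      ≤ β * (p * M * S) := mul_le_mul_of_nonneg_left hLHS hβnn
    _ = S := by
        rw [hβ, ← mul_assoc, inv_mul_cancel₀ (ne_of_gt hpM), one_mul]
    _ ≤ ∑ k, ⟪d k, u k - v k⟫ := hSle
end
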